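/- Let (X,T) be a topological dynamical system on a compact metric space and let d, n be positive integers. Then the regionally proximal relation of order d for T equals the regionally proximal relation of order d for T^n: RP^{[d]}(X,T) = RP^{[d]}(X,T^n). -/

import Mathlib

/-- The regionally proximal relation of order `d` for the ℤ-system generated by
the invertible map `S` (here `S` is the underlying bijection of a homeomorphism,
and `S ^ n` for `n : ℤ` is its `n`-th iterate). -/
def RP {X : Type*} [MetricSpace X] (d : ℕ) (S : Equiv.Perm X) : Set (X × X) :=
  {p | ∀ δ > (0 : ℝ), ∃ x' y' : X, ∃ n : Fin d → ℤ,
    dist p.1 x' < δ ∧ dist p.2 y' < δ ∧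
    ∀ ε : Fin d → Bool, ε ≠ (fun _ => false) →
      dist ((S ^ (∑ i, if ε i then n i else 0)) x')
           ((S ^ (∑ i, if ε i then n i else 0)) y') < δ}

lemma cont_zpow {X : Type*} [MetricSpace X] (T : X ≃ₜ X) (m : ℤ) :
    Continuous fun x => (T.toEquiv ^ m) x := by
  induction m using Int.induction_on with
  | zero => simpa using continuous_id'
  | succ k ih =>
      have h : T.toEquiv ^ ((k : ℤ) + 1) = T.toEquiv ^ (k : ℤ) * T.toEquiv :=
        zpow_add_one ..
      rw [h]
      simp only [Equiv.Perm.mul_apply]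
      exact ih.comp T.continuous
  | pred k ih =>
      have h : T.toEquiv ^ (-(k : ℤ) - 1) = T.toEquiv ^ (-(k : ℤ)) * T.toEquiv⁻¹ :=
        zpow_sub_one ..
      have hc : Continuous fun x : X => T.toEquiv⁻¹ x := T.symm.continuous
      rw [h]
      simp only [Equiv.Perm.mul_apply]
      exact ih.comp hc

lemma key {X : Type*} [MetricSpace X] [CompactSpace X] (T : X ≃ₜ X) (δ : ℝ) (hδ : 0 < δ)
    (N : ℕ) : ∃ δ' > 0, δ' ≤ δ ∧ ∀ j : ℕ, j ≤ N → ∀ a b : X, dist a b < δ' →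
      dist ((T.toEquiv ^ (-(j : ℤ))) a) ((T.toEquiv ^ (-(j : ℤ))) b) < δ := by
  induction N with
  | zero =>
      refine ⟨δ, hδ, le_refl _, ?_⟩
      intro j hj a b hab
      interval_cases j
      simpa using hab
  | succ N ih =>
      obtain ⟨δ₁, hδ₁, hle, h₁⟩ := ih
      have huc : UniformContinuous fun x => (T.toEquiv ^ (-((N+1 : ℕ) : ℤ))) x :=
        CompactSpace.uniformContinuous_of_continuous (cont_zpow T _)
      rw [Metric.uniformContinuous_iff] at huc
      obtain ⟨δ₂, hδ₂, h₂⟩ := huc δ hδ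
      refine ⟨min δ₁ δ₂, lt_min hδ₁ hδ₂, le_trans (min_le_left _ _) hle, ?_⟩
      intro j hj a b hab
      rcases Nat.lt_succ_iff_lt_or_eq.mp (Nat.lt_succ_of_le hj) with h | h
      · exact h₁ j (Nat.lt_succ_iff.mp h) a b (lt_of_lt_of_le hab (min_le_left _ _))
      · subst h
        exact h₂ (lt_of_lt_of_le hab (min_le_right _ _))


/-- For any t.d.s. `(X,T)` and positive integers `d`, `n`,
`RP^[d](X,T) = RP^[d](X,T^n)`. -/
theorem stmt_2 {X : Type*} [MetricSpace X] [CompactSpace X] (T : X ≃ₜ X)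
    (d n : ℕ) (hd : 1 ≤ d) (hn : 1 ≤ n) :
    RP d T.toEquiv = RP d (T.toEquiv ^ n) := by
  have hn' : (0 : ℤ) < (n : ℤ) := by exact_mod_cast hn
  have pow_eq : ∀ s : ℤ, (T.toEquiv ^ n) ^ s = T.toEquiv ^ ((n : ℤ) * s) := by
    intro s
    rw [← zpow_natCast, ← zpow_mul]
  ext p
  constructor
  · intro hp δ hδ
    obtain ⟨δ', hδ'pos, hδ'le, hkey⟩ := key T δ hδ (d * n)
    obtain ⟨x', y', m, hx, hy, hm⟩ := hp δ' hδ'pos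
    set q : Fin d → ℤ := fun i => m i / (n : ℤ) with hq
    set r : Fin d → ℤ := fun i => m i % (n : ℤ) with hr
    have hnqr : ∀ i, (n : ℤ) * q i = m i - r i := by
      intro i
      simp only [hq, hr]
      have h := Int.mul_ediv_add_emod (m i) (n : ℤ)
      linarith
    refine ⟨x', y', q, lt_of_lt_of_le hx hδ'le, lt_of_lt_of_le hy hδ'le, ?_⟩
    intro ε hε
    set Sq : ℤ := ∑ i, if ε i then q i else 0 with hSq
    set Sm : ℤ := ∑ i, if ε i then m i else 0 with hSm
    set Sr : ℤ := ∑ i, if ε i then r i else 0 with hSr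
    have hns : (n : ℤ) * Sq = Sm - Sr := by
      rw [hSq, Finset.mul_sum, hSm, hSr, ← Finset.sum_sub_distrib]
      refine Finset.sum_congr rfl fun i _ => ?_
      split <;> simp [hnqr i]
    have hr_nonneg : ∀ i, 0 ≤ r i := fun i => Int.emod_nonneg _ (by omega)
    have hr_lt : ∀ i, r i < n := fun i => Int.emod_lt_of_pos _ hn'
    have hSr_nonneg : 0 ≤ Sr := Finset.sum_nonneg fun i _ => by
      split
      · exact hr_nonneg i
      · exact le_refl _
    have hSr_le : Sr ≤ (d : ℤ) * n := by
      calc Sr ≤ ∑ _i : Fin d, (n : ℤ) := by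
              refine Finset.sum_le_sum fun i _ => ?_
              split
              · exact le_of_lt (hr_lt i)
              · omega
        _ = (d : ℤ) * n := by simp [mul_comm]
    set j : ℕ := Sr.toNat with hj
    have hjle : j ≤ d * n := by
      have : (j : ℤ) ≤ (d : ℤ) * n := by
        rw [hj, Int.toNat_of_nonneg hSr_nonneg]; exact hSr_le
      exact_mod_cast this
    have hjz : -(j : ℤ) = -Sr := by rw [hj, Int.toNat_of_nonneg hSr_nonneg]
    have hsplit : (T.toEquiv ^ n) ^ Sq = T.toEquiv ^ (-(j:ℤ)) * T.toEquiv ^ Sm := by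
      rw [pow_eq, hns, hjz, ← zpow_add]
      ring_nf
    rw [hsplit]
    simp only [Equiv.Perm.mul_apply]
    exact hkey j hjle _ _ (hm ε hε)
  · intro hp δ hδ
    obtain ⟨x', y', q, hx, hy, hq⟩ := hp δ hδ
    refine ⟨x', y', fun i => (n : ℤ) * q i, hx, hy, ?_⟩
    intro ε hε
    have hsum : (∑ i, if ε i then (n : ℤ) * q i else 0)
        = (n : ℤ) * ∑ i, if ε i then q i else 0 := by
      rw [Finset.mul_sum]
      refine Finset.sum_congr rfl fun i _ => ?_
      split <;> simp
    rw [hsum, ← pow_eq]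
    exact hq ε hε
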